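/- Let H = ⟨X ∪ {t} | R, t⁻¹ a t = φ(a) for all a ∈ A⟩ be an HNN-extension of G = ⟨X | R⟩ with associated subgroups A and B = φ(A), and suppose g₁ ∈ G is not a proper power in G. Then the image of g₁ in H is a proper power in H if and only if there exist k ≥ 2 and g₂ ∈ G such that g₁ is conjugate in H to g₂^k. -/

import Mathlib

/-- `g` is a proper power: `g = h ^ k` for some `h` and some `k ≥ 2`. -/
def IsProperPower {G : Type*} [Group G] (g : G) : Prop :=
  ∃ (h : G) (k : ℕ), 2 ≤ k ∧ g = h ^ k

namespace HNNAux

open HNNExtension HNNExtension.NormalWord List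

variable {G : Type*} [Group G] {A B : Subgroup G} {φ : A ≃* B}
  (d : TransversalPair G A B)

/-- The chain condition of reduced words. -/
def C (A B : Subgroup G) : (ℤˣ × G) → (ℤˣ × G) → Prop :=
  fun a b => a.2 ∈ toSubgroup A B a.1 → a.1 = b.1

/-- The product of a list of letters. -/
def P (l : List (ℤˣ × G)) : HNNExtension G A B φ :=
  (l.map fun x => t ^ (x.1 : ℤ) * of x.2).prod

@[simp] lemma P_nil : (P [] : HNNExtension G A B φ) = 1 := rfl

@[simp] lemma P_cons (a : ℤˣ × G) (l : List (ℤˣ × G)) :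
    (P (a :: l) : HNNExtension G A B φ) = (t ^ (a.1 : ℤ) * of a.2) * P l := by
  simp [P]

@[simp] lemma P_append (l₁ l₂ : List (ℤˣ × G)) :
    (P (l₁ ++ l₂) : HNNExtension G A B φ) = P l₁ * P l₂ := by
  simp [P]

lemma prod_eq (w : ReducedWord G A B) :
    w.prod φ = of w.head * P w.toList := rfl

/-- length of the normal form of an element -/
noncomputable def len (x : HNNExtension G A B φ) : ℕ :=
  (equiv φ d x).toList.length

lemma equiv_def (x : HNNExtension G A B φ) :
    equiv φ d x = x • (empty : NormalWord d) := rfl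

lemma len_eq (w : ReducedWord G A B) : len d (w.prod φ) = w.toList.length := by
  obtain ⟨w', h1, h2, -⟩ := ReducedWord.exists_normalWord_prod_eq φ d w
  have hw : equiv φ d (w.prod φ) = w' := by
    rw [(equiv φ d).apply_eq_iff_eq_symm_apply]
    exact h1.symm
  have hlen := congrArg List.length h2
  simp only [List.length_map] at hlen
  simp [len, hw, hlen]

lemma len_of_mul (g : G) (x : HNNExtension G A B φ) :
    len d (of g * x) = len d x := by
  unfold len
  rw [equiv_def, equiv_def, mul_smul, of_smul_eq_smul, group_smul_toList]

lemma length_unitsSMulWithCancel (u : ℤˣ) (w : NormalWord d) (h : Cancels u w) :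
    w.toList.length = (unitsSMulWithCancel φ u w h).toList.length + 1 := by
  revert h
  induction w using consRecOn with
  | ofGroup g => intro h; simp [Cancels, ofGroup] at h
  | cons g u' w h1 h2 _ => intro h; simp [unitsSMulWithCancel]

lemma length_unitsSMul (u : ℤˣ) (w : NormalWord d) :
    (unitsSMul φ u w).toList.length ≤ w.toList.length + 1 ∧
      w.toList.length ≤ (unitsSMul φ u w).toList.length + 1 := by
  rw [unitsSMul]
  split_ifs with hcan
  · have := length_unitsSMulWithCancel (φ := φ) d u w hcan
    omega
  · constructor <;> simp <;> omega

lemma lipschitz (a : HNNExtension G A B φ) :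
    ∃ N : ℕ, ∀ x, len d (a * x) ≤ len d x + N ∧ len d x ≤ len d (a * x) + N := by
  induction a using induction_on with
  | of g => exact ⟨0, fun x => by simp [len_of_mul]⟩
  | t =>
    refine ⟨1, fun x => ?_⟩
    have h1 : equiv φ d (t * x) = unitsSMul φ 1 (equiv φ d x) := by
      rw [equiv_def, equiv_def, mul_smul, ← t_smul_eq_unitsSMul]
    have h2 := length_unitsSMul (φ := φ) d 1 (equiv φ d x)
    unfold len
    rw [h1]
    omega
  | mul x y hx hy =>
    obtain ⟨N1, h1⟩ := hx
    obtain ⟨N2, h2⟩ := hy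
    refine ⟨N1 + N2, fun z => ?_⟩
    have := h1 (y * z)
    have := h2 z
    rw [mul_assoc]
    omega
  | inv x hx =>
    obtain ⟨N, h⟩ := hx
    refine ⟨N, fun z => ?_⟩
    have := h (x⁻¹ * z)
    rw [← mul_assoc, mul_inv_cancel, one_mul] at this
    omega

lemma chain'_mod_last {m : List (ℤˣ × G)} {v : ℤˣ} {b b' : G}
    (h : (m ++ [(v, b)]).Chain' (C A B)) : (m ++ [(v, b')]).Chain' (C A B) := by
  simp only [List.Chain'] at h ⊢
  rw [List.isChain_append] at h ⊢
  refine ⟨h.1, List.isChain_singleton _, ?_⟩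
  intro x hx y hy
  simp only [List.head?_cons, Option.mem_def, Option.some.injEq] at hy
  subst hy
  exact h.2.2 x hx (v, b) (by simp)

lemma t_pow_mul_of {u : ℤˣ} {a : G} (ha : a ∈ toSubgroup A B u) :
    ∃ a' : G, t ^ (u : ℤ) * of a = (of a' : HNNExtension G A B φ) * t ^ (u : ℤ) := by
  rcases Int.units_eq_one_or u with rfl | rfl
  · have ha' : a ∈ A := ha
    exact ⟨φ ⟨a, ha'⟩, by simpa using t_mul_of (φ := φ) ⟨a, ha'⟩⟩
  · have ha' : a ∈ B := ha
    refine ⟨φ.symm ⟨a, ha'⟩, ?_⟩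
    have := inv_t_mul_of (φ := φ) ⟨a, ha'⟩
    simpa using this

/-- powers of a cyclically reduced word -/
lemma pow_len (h : G) (l' : List (ℤˣ × G)) (v : ℤˣ) (b : G)
    (hc : (l' ++ [(v, b)]).Chain' (C A B))
    (hseam : ∀ q ∈ (l' ++ [(v, b)]).head?, b * h ∈ toSubgroup A B v → v = q.1)
    (k : ℕ) :
    ∃ L : List (ℤˣ × G), L.Chain' (C A B) ∧
      L.head?.map Prod.fst = ((l' ++ [(v, b)]).head?).map Prod.fst ∧
      L.length = (k + 1) * (l' ++ [(v, b)]).length ∧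
      of h * P L = ((of h * P (l' ++ [(v, b)])) ^ (k + 1) : HNNExtension G A B φ) := by
  induction k with
  | zero => exact ⟨l' ++ [(v, b)], hc, rfl, by simp, by simp⟩
  | succ n ih =>
    obtain ⟨L, hL1, hL2, hL3, hL4⟩ := ih
    refine ⟨(l' ++ [(v, b * h)]) ++ L, ?_, ?_, ?_, ?_⟩
    · simp only [List.Chain']
      rw [List.isChain_append]
      refine ⟨chain'_mod_last hc, hL1, ?_⟩
      intro x hx y hy
      rw [List.getLast?_concat] at hx
      simp only [Option.mem_def, Option.some.injEq] at hx
      subst hx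
      intro hmem
      have h1 : L.head?.map Prod.fst = some y.1 := by
        rw [show L.head? = some y from hy]; rfl
      rw [hL2] at h1
      obtain ⟨q, hq1, hq2⟩ := Option.map_eq_some_iff.1 h1
      exact hq2 ▸ hseam q hq1 hmem
    · cases l' <;> simp
    · simp only [List.length_append, hL3, List.length_singleton]
      ring
    · have hPM : (P (l' ++ [(v, b * h)]) : HNNExtension G A B φ) =
          P (l' ++ [(v, b)]) * of h := by
        simp [mul_assoc]
      rw [P_append, hPM]
      rw [pow_succ']
      rw [← hL4]
      group

/-- cyclic reduction -/
lemma cyclic_reduce (x : HNNExtension G A B φ) :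
    ∃ c : HNNExtension G A B φ,
      (∃ g : G, c⁻¹ * x * c = of g) ∨
      (∃ (h : G) (l' : List (ℤˣ × G)) (v : ℤˣ) (b : G),
        (l' ++ [(v, b)]).Chain' (C A B) ∧
        (∀ q ∈ (l' ++ [(v, b)]).head?, b * h ∈ toSubgroup A B v → v = q.1) ∧
        c⁻¹ * x * c = of h * P (l' ++ [(v, b)])) := by
  obtain ⟨d⟩ := TransversalPair.nonempty G A B
  generalize hn : len d x = n
  induction n using Nat.strong_induction_on generalizing x with
  | _ n ih =>
  set w := equiv φ d x with hw
  have hx : of w.head * P w.toList = x := (equiv φ d).symm_apply_apply x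
  have hwn : w.toList.length = n := by rw [← hn]; rfl
  rcases List.eq_nil_or_concat w.toList with hnil | ⟨l', a, hla⟩
  · refine ⟨1, Or.inl ⟨w.head, ?_⟩⟩
    rw [inv_one, one_mul, mul_one, ← hx, hnil]
    simp
  · rw [List.concat_eq_append] at hla
    obtain ⟨v, b⟩ := a
    by_cases hseam : ∀ q ∈ (l' ++ [(v, b)]).head?, b * w.head ∈ toSubgroup A B v → v = q.1
    · have hcc : (l' ++ [(v, b)]).Chain' (C A B) := by rw [← hla]; exact w.chain
      refine ⟨1, Or.inr ⟨w.head, l', v, b, hcc, hseam, ?_⟩⟩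
      rw [inv_one, one_mul, mul_one, ← hx, hla]
    · push_neg at hseam
      rcases l' with _ | ⟨p, m⟩
      · obtain ⟨q, hq, hmem, hvq⟩ := hseam
        obtain rfl : (v, b) = q := by simpa using hq
        exact absurd rfl hvq
      · obtain ⟨q, hq, hmem, hvq⟩ := hseam
        obtain rfl : p = q := by simpa using hq
        obtain ⟨u₁, g₁⟩ := p
        simp only at hvq hmem
        have hu1 : u₁ = -v := by
          have h := Int.units_ne_iff_eq_neg.1 hvq
          rw [h]; simp
        subst hu1
        set h := w.head with hh
        obtain ⟨a', ha'⟩ := t_pow_mul_of (φ := φ) hmem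
        have hb : (of (b * h) : HNNExtension G A B φ) = of b * of h := map_mul of b h
        have key : (t : HNNExtension G A B φ) ^ (v:ℤ) * (of b * of h) =
            of a' * t ^ (v:ℤ) := by rw [← hb]; exact ha'
        have hxx : x = of h *
            (((t : HNNExtension G A B φ)^(v:ℤ))⁻¹ * of g₁ * (P m * (t^(v:ℤ) * of b))) := by
          rw [← hx, hla]
          simp [mul_assoc, Units.val_neg, zpow_neg]
        set c₁ : HNNExtension G A B φ := of h * ((t:HNNExtension G A B φ)^(v:ℤ))⁻¹ with hc₁
        have hy : c₁⁻¹ * x * c₁ = of g₁ * (P m * of a') := by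
          rw [hxx, hc₁]
          generalize (t : HNNExtension G A B φ)^(v:ℤ) = T at key ⊢
          have e1 : (of h * T⁻¹)⁻¹ *
              (of h * (T⁻¹ * of g₁ * (P m * (T * of b)))) * (of h * T⁻¹) =
              of g₁ * (P m * (T * (of b * of h) * T⁻¹)) := by group
          rw [e1, key]
          simp [mul_assoc]
        rcases List.eq_nil_or_concat m with rfl | ⟨m', p2, hm⟩
        · refine ⟨c₁, Or.inl ⟨g₁ * a', ?_⟩⟩
          rw [hy]; simp [map_mul]
        · obtain ⟨v₂, b₂⟩ := p2
          rw [List.concat_eq_append] at hm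
          have hy2 : c₁⁻¹ * x * c₁ = of g₁ * P (m' ++ [(v₂, b₂ * a')]) := by
            rw [hy, hm]
            simp [mul_assoc, map_mul]
          have hch : (m' ++ [(v₂, b₂ * a')]).Chain' (C A B) := by
            apply chain'_mod_last (b := b₂)
            have hc0 : (((-v, g₁) :: m) ++ [(v, b)]).Chain' (C A B) := by
              rw [← hla]; exact w.chain
            have hc1 := (List.isChain_append.1 hc0).1
            have hc2 : (m' ++ [(v₂, b₂)]).Chain' (C A B) := hm ▸ hc1.tail
            exact hc2
          have hlen : len d (c₁⁻¹ * x * c₁) = m'.length + 1 := by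
            have hred := len_eq (φ := φ) d ⟨g₁, m' ++ [(v₂, b₂ * a')], hch⟩
            have heq : (⟨g₁, m' ++ [(v₂, b₂ * a')], hch⟩ : ReducedWord G A B).prod φ =
                c₁⁻¹ * x * c₁ := hy2.symm
            rw [heq] at hred
            simpa using hred
          have hlt : m'.length + 1 < n := by
            rw [hla, hm] at hwn
            simp at hwn
            omega
          obtain ⟨c', hc'⟩ := ih (m'.length + 1) hlt (c₁⁻¹ * x * c₁) hlen
          refine ⟨c₁ * c', ?_⟩
          have hcomb : (c₁ * c')⁻¹ * x * (c₁ * c') =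
              c'⁻¹ * (c₁⁻¹ * x * c₁) * c' := by group
          rw [hcomb]
          exact hc'

lemma key (x : HNNExtension G A B φ) (k : ℕ) (hk : 1 ≤ k) (g : G)
    (hx : x ^ k = of g) : ∃ (c : HNNExtension G A B φ) (g' : G),
      x = c * of g' * c⁻¹ := by
  obtain ⟨d⟩ := TransversalPair.nonempty G A B
  obtain ⟨c, hc⟩ := cyclic_reduce (φ := φ) x
  rcases hc with ⟨g', hg'⟩ | ⟨h, l', v, b, hch, hseam, hprod⟩
  · exact ⟨c, g', by rw [← hg']; group⟩
  · exfalso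
    obtain ⟨N, hN⟩ := lipschitz d c⁻¹
    set j := len d c + N + 1 with hj
    have hkj1 : 1 ≤ k * j := Nat.mul_pos hk (by omega)
    obtain ⟨L, hL1, hL2, hL3, hL4⟩ := pow_len (φ := φ) h l' v b hch hseam (k * j - 1)
    rw [Nat.sub_add_cancel hkj1] at hL3 hL4
    have hconj : (c⁻¹ * x * c) ^ (k * j) = c⁻¹ * x ^ (k * j) * c := by
      simpa using conj_pow (i := k * j) (a := c⁻¹) (b := x)
    have hylen : len d ((c⁻¹ * x * c) ^ (k * j)) =
        k * j * (l' ++ [(v, b)]).length := by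
      have hred := len_eq (φ := φ) d ⟨h, L, hL1⟩
      have he : (⟨h, L, hL1⟩ : ReducedWord G A B).prod φ =
          (c⁻¹ * x * c) ^ (k * j) := by
        rw [prod_eq]
        dsimp only
        rw [hL4, hprod]
      rw [he] at hred
      rw [hred, hL3]
    have hbound : len d ((c⁻¹ * x * c) ^ (k * j)) ≤ len d c + N := by
      rw [hconj, pow_mul, hx, ← map_pow, mul_assoc]
      have h1 := (hN (of (g ^ j) * c)).1
      rw [len_of_mul] at h1
      omega
    have hgrow : j ≤ k * j * (l' ++ [(v, b)]).length := by
      have hone : 1 ≤ (l' ++ [(v, b)]).length := by simp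
      calc j ≤ k * j := Nat.le_mul_of_pos_left _ (by omega)
        _ ≤ k * j * (l' ++ [(v, b)]).length := Nat.le_mul_of_pos_right _ (by omega)
    rw [← hylen] at hgrow
    omega

end HNNAux

theorem stmt9 {G : Type*} [Group G] (A B : Subgroup G) (φ : A ≃* B)
    (g₁ : G) (hg₁ : ¬ IsProperPower g₁) :
    IsProperPower (HNNExtension.of g₁ : HNNExtension G A B φ) ↔
      ∃ (k : ℕ) (g₂ : G), 2 ≤ k ∧
        IsConj (HNNExtension.of g₁ : HNNExtension G A B φ) ((HNNExtension.of g₂) ^ k) := by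
  constructor
  · rintro ⟨h, k, hk, hpow⟩
    obtain ⟨c, g₂, rfl⟩ := HNNAux.key h k (by omega) g₁ hpow.symm
    refine ⟨k, g₂, hk, ?_⟩
    rw [isConj_iff]
    refine ⟨c⁻¹, ?_⟩
    rw [hpow]
    rw [conj_pow]
    group
  · rintro ⟨k, g₂, hk, hconj⟩
    obtain ⟨c, hc⟩ := isConj_iff.1 hconj
    refine ⟨c⁻¹ * HNNExtension.of g₂ * c, k, hk, ?_⟩
    have h2 : (c⁻¹ * HNNExtension.of g₂ * c) ^ k =
        c⁻¹ * (HNNExtension.of g₂ : HNNExtension G A B φ) ^ k * c := by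
      simpa using conj_pow (i := k) (a := c⁻¹)
        (b := (HNNExtension.of g₂ : HNNExtension G A B φ))
    rw [h2, ← hc]
    group
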